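/- Let F ∈ ℂ[x₁,…,xₙ] be a polynomial of degree three with homogeneous decomposition F = F₃ + F₂ + F₁ + F₀, and suppose the Hilbert function of Apolar(F) is (1, n, n, 1), i.e., dim_ℂ(S∘F) = 2n + 2 (the maximal value). Then S∘F decomposes as the internal direct sum S∘F = ℂ·(F₃+F₂) ⊕ span_ℂ{αᵢ∘F₃ : 1 ≤ i ≤ n} ⊕ (ℂ ⊕ span_ℂ{x₁,…,xₙ}). Consequently, if G = F₃ + G₂ + G₁ + G₀ is another polynomial of degree three with the same leading form F₃ and with G₂ − F₂ ∈ span_ℂ{αᵢ∘F₃ : 1 ≤ i ≤ n}, then S∘G = S∘F and hence Ann(G) = Ann(F). -/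

import Mathlib

noncomputable section

set_option maxHeartbeats 2000000

open MvPolynomial

namespace Apolarity

variable {n : ℕ}

/-- Partial derivatives commute. -/
lemma pderiv_comm {σ : Type*} {R : Type*} [CommSemiring R] (i j : σ)
    (p : MvPolynomial σ R) :
    MvPolynomial.pderiv i (MvPolynomial.pderiv j p) =
      MvPolynomial.pderiv j (MvPolynomial.pderiv i p) := by
  classical
  induction p using MvPolynomial.induction_on' with
  | monomial s a =>
      simp only [pderiv_monomial]
      rcases eq_or_ne i j with rfl | hij
      · rfl
      · rw [tsub_right_comm]
        congr 1
        rw [Finsupp.tsub_apply, Finsupp.tsub_apply, Finsupp.single_eq_of_ne' hij,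
          Finsupp.single_eq_of_ne' (Ne.symm hij)]
        simp only [Nat.sub_zero]
        ring
  | add p q hp hq => simp [hp, hq]

/-- The set of partial-derivative operators on `P = ℂ[x₁,…,xₙ]`. -/
def pdSet (n : ℕ) : Set (Module.End ℂ (MvPolynomial (Fin n) ℂ)) :=
  Set.range fun i : Fin n => (MvPolynomial.pderiv i).toLinearMap

lemma pdSet_comm : ∀ a ∈ pdSet n, ∀ b ∈ pdSet n, a * b = b * a := by
  rintro _ ⟨i, rfl⟩ _ ⟨j, rfl⟩
  refine LinearMap.ext fun p => ?_
  simp only [Module.End.mul_apply]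
  exact pderiv_comm i j p

/-- The algebra map `S = ℂ[α₁,…,αₙ] → End_ℂ(P)` sending `αᵢ` to `∂/∂xᵢ`.
`D n σ F` is the action `σ∘F` of `σ ∈ S` on `F ∈ P = ℂ[x₁,…,xₙ]`. -/
def D (n : ℕ) : MvPolynomial (Fin n) ℂ →ₐ[ℂ] Module.End ℂ (MvPolynomial (Fin n) ℂ) :=
  letI : CommSemiring (Algebra.adjoin ℂ (pdSet n)) :=
    Algebra.adjoinCommSemiringOfComm ℂ pdSet_comm
  ((Algebra.adjoin ℂ (pdSet n)).val).comp
    (MvPolynomial.aeval fun i : Fin n =>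
      (⟨(MvPolynomial.pderiv i).toLinearMap,
        Algebra.subset_adjoin (Set.mem_range_self i)⟩ : Algebra.adjoin ℂ (pdSet n)))

@[simp] lemma D_X (i : Fin n) (F : MvPolynomial (Fin n) ℂ) :
    D n (X i) F = MvPolynomial.pderiv i F := by
  simp [D]

/-- The apolar ideal `Ann(F) = {σ ∈ S : σ∘F = 0}`. -/
def annIdeal (F : MvPolynomial (Fin n) ℂ) : Ideal (MvPolynomial (Fin n) ℂ) where
  carrier := {σ | D n σ F = 0}
  zero_mem' := by simp
  add_mem' := by
    intro a b ha hb
    simp only [Set.mem_setOf_eq, map_add, LinearMap.add_apply] at *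
    rw [ha, hb, add_zero]
  smul_mem' := by
    intro c x hx
    simp only [Set.mem_setOf_eq, smul_eq_mul, map_mul, Module.End.mul_apply] at *
    rw [hx, map_zero]

/-- The apolar algebra `Apolar(F) = S/Ann(F)`. -/
abbrev Apolar (F : MvPolynomial (Fin n) ℂ) := MvPolynomial (Fin n) ℂ ⧸ annIdeal F

/-- The `ℂ`-linear map `σ ↦ σ∘F`. -/
def applyAt (F : MvPolynomial (Fin n) ℂ) :
    MvPolynomial (Fin n) ℂ →ₗ[ℂ] MvPolynomial (Fin n) ℂ where
  toFun σ := D n σ F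
  map_add' a b := by simp only [map_add, LinearMap.add_apply]
  map_smul' c a := by simp only [map_smul, LinearMap.smul_apply, RingHom.id_apply]

/-- `S_r∘F`, the image of the degree-`r` part of `S` acting on `F`. -/
def SrF (r : ℕ) (F : MvPolynomial (Fin n) ℂ) : Submodule ℂ (MvPolynomial (Fin n) ℂ) :=
  (MvPolynomial.homogeneousSubmodule (Fin n) ℂ r).map (applyAt F)

/-- The perpendicular space of an ideal `J ⊆ S`:
polynomials killed by every element of `J`. -/
def perp (J : Ideal (MvPolynomial (Fin n) ℂ)) : Submodule ℂ (MvPolynomial (Fin n) ℂ) :=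
  ⨅ σ ∈ J, LinearMap.ker (D n σ)

lemma mem_perp {J : Ideal (MvPolynomial (Fin n) ℂ)} {G : MvPolynomial (Fin n) ℂ} :
    G ∈ perp J ↔ ∀ σ ∈ J, D n σ G = 0 := by
  simp [perp, Submodule.mem_iInf, LinearMap.mem_ker]


lemma coeff_pderiv (i : Fin n) (p : MvPolynomial (Fin n) ℂ) (d : Fin n →₀ ℕ) :
    coeff d (MvPolynomial.pderiv i p)
      = ((d i : ℂ) + 1) * coeff (d + Finsupp.single i 1) p := by
  induction p using MvPolynomial.induction_on' with
  | add p q hp hq => simp only [map_add, coeff_add, hp, hq]; ring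
  | monomial s a =>
      rw [pderiv_monomial, coeff_monomial, coeff_monomial]
      by_cases h : s = d + Finsupp.single i 1
      · subst h
        rw [if_pos (add_tsub_cancel_right _ _), if_pos rfl]
        rw [Finsupp.add_apply, Finsupp.single_eq_same]
        push_cast
        ring
      · rw [if_neg h, mul_zero]
        by_cases h2 : s - Finsupp.single i 1 = d
        · by_cases h3 : s i = 0
          · rw [if_pos h2, h3]; simp
          · exfalso
            apply h
            ext j
            rcases eq_or_ne j i with rfl | hj
            · have := congrArg (fun f : Fin n →₀ ℕ => f j) h2
              simp only [Finsupp.tsub_apply, Finsupp.single_eq_same] at this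
              simp only [Finsupp.add_apply, Finsupp.single_eq_same]
              omega
            · have := congrArg (fun f : Fin n →₀ ℕ => f j) h2
              simp only [Finsupp.tsub_apply, Finsupp.single_eq_of_ne' (Ne.symm hj)] at this
              simp only [Finsupp.add_apply, Finsupp.single_eq_of_ne' (Ne.symm hj)]
              omega
        · rw [if_neg h2]

lemma degree_add_single (d : Fin n →₀ ℕ) (i : Fin n) :
    Finsupp.degree (d + Finsupp.single i 1) = Finsupp.degree d + 1 := by
  rw [Finsupp.degree_eq_weight_one, map_add]
  rw [← Finsupp.degree_eq_weight_one]
  congr 1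
  exact Finsupp.degree_single i 1

lemma sum_eq_degree (d : Fin n →₀ ℕ) : (d.sum fun _ e => e) = Finsupp.degree d := by
  rfl

lemma mem_support_of_pderiv {i : Fin n} {p : MvPolynomial (Fin n) ℂ} {d : Fin n →₀ ℕ}
    (h : d ∈ (MvPolynomial.pderiv i p).support) :
    d + Finsupp.single i 1 ∈ p.support := by
  rw [mem_support_iff] at h ⊢
  intro h0
  rw [coeff_pderiv, h0, mul_zero] at h
  exact h rfl

lemma totalDegree_pderiv_le (i : Fin n) (p : MvPolynomial (Fin n) ℂ) (m : ℕ)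
    (h : p.totalDegree ≤ m + 1) : (MvPolynomial.pderiv i p).totalDegree ≤ m := by
  rw [totalDegree, Finset.sup_le_iff]
  intro d hd
  have h1 := le_totalDegree (mem_support_of_pderiv hd)
  rw [sum_eq_degree] at h1 ⊢
  rw [degree_add_single] at h1
  omega

lemma isHomogeneous_pderiv (i : Fin n) {p : MvPolynomial (Fin n) ℂ} {m : ℕ}
    (h : p.IsHomogeneous (m + 1)) : (MvPolynomial.pderiv i p).IsHomogeneous m := by
  intro d hd
  have hd' : coeff (d + Finsupp.single i 1) p ≠ 0 := by
    intro h0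
    rw [coeff_pderiv, h0, mul_zero] at hd
    exact hd rfl
  have := h hd'
  rw [show (Finsupp.weight 1 : (Fin n →₀ ℕ) →+ ℕ) = Finsupp.weight (fun _ => 1) from rfl, ← Finsupp.degree_eq_weight_one] at this ⊢
  rw [degree_add_single] at this
  omega

lemma exists_pderiv_ne_zero {p : MvPolynomial (Fin n) ℂ} {m : ℕ} (hp : p ≠ 0)
    (h : p.IsHomogeneous (m + 1)) : ∃ i, MvPolynomial.pderiv i p ≠ 0 := by
  obtain ⟨d, hd⟩ := Finset.nonempty_iff_ne_empty.mpr
    (fun h0 => hp (MvPolynomial.support_eq_empty.mp h0))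
  have hc : coeff d p ≠ 0 := mem_support_iff.mp hd
  have hdeg : Finsupp.degree d = m + 1 := by
    have := h hc; rwa [show (Finsupp.weight 1 : (Fin n →₀ ℕ) →+ ℕ) = Finsupp.weight (fun _ => 1) from rfl, ← Finsupp.degree_eq_weight_one] at this
  have : ∃ i, d i ≠ 0 := by
    by_contra h0
    push_neg at h0
    have : d = 0 := Finsupp.ext h0
    rw [this, map_zero] at hdeg
    omega
  obtain ⟨i, hi⟩ := this
  refine ⟨i, fun h0 => ?_⟩
  have key : coeff ((d - Finsupp.single i 1) + Finsupp.single i 1) p ≠ 0 := by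
    have hdd : (d - Finsupp.single i 1) + Finsupp.single i 1 = d := by
      ext j
      rcases eq_or_ne j i with rfl | hj
      · simp only [Finsupp.add_apply, Finsupp.tsub_apply, Finsupp.single_eq_same]
        omega
      · simp [Finsupp.add_apply, Finsupp.tsub_apply,
          Finsupp.single_eq_of_ne' (Ne.symm hj)]
    rwa [hdd]
  have := coeff_pderiv i p (d - Finsupp.single i 1)
  rw [h0, coeff_zero] at this
  exact key (by
    rcases mul_eq_zero.mp this.symm with h1 | h1
    · exfalso
      have : (((d - Finsupp.single i 1 : Fin n →₀ ℕ) i : ℕ) : ℂ) + 1 ≠ 0 := by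
        have : ((((d - Finsupp.single i 1 : Fin n →₀ ℕ) i : ℕ) + 1 : ℕ) : ℂ) ≠ 0 := Nat.cast_ne_zero.mpr (by omega)
        push_cast at this
        exact this
      exact this h1
    · exact h1)



lemma D_C (c : ℂ) (F : MvPolynomial (Fin n) ℂ) : D n (C c) F = c • F := by
  have h : (C c : MvPolynomial (Fin n) ℂ) = algebraMap ℂ _ c := rfl
  rw [h, AlgHom.commutes]
  exact Module.algebraMap_end_apply ℂ ℂ _ c F

lemma D_one (F : MvPolynomial (Fin n) ℂ) : D n 1 F = F := by
  rw [map_one]; rfl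

lemma D_mul (σ τ F : MvPolynomial (Fin n) ℂ) : D n (σ * τ) F = D n σ (D n τ F) := by
  rw [map_mul]; rfl

lemma applyAt_apply (F σ : MvPolynomial (Fin n) ℂ) : applyAt F σ = D n σ F := rfl

lemma self_mem_range (F : MvPolynomial (Fin n) ℂ) :
    F ∈ LinearMap.range (applyAt F) := ⟨1, D_one F⟩

lemma pderiv_D (i : Fin n) (σ F : MvPolynomial (Fin n) ℂ) :
    D n (X i * σ) F = MvPolynomial.pderiv i (D n σ F) := by
  rw [D_mul, D_X]

lemma totalDegree_D_le (m : ℕ) (σ : MvPolynomial (Fin n) ℂ) :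
    ∀ F : MvPolynomial (Fin n) ℂ, F.totalDegree ≤ m → (D n σ F).totalDegree ≤ m := by
  induction σ using MvPolynomial.induction_on with
  | C a =>
      intro F hF
      rw [D_C]
      exact (totalDegree_smul_le _ _).trans hF
  | add p q hp hq =>
      intro F hF
      rw [map_add]
      exact (totalDegree_add _ _).trans (max_le (hp F hF) (hq F hF))
  | mul_X p i hp =>
      intro F hF
      rw [mul_comm, pderiv_D]
      exact totalDegree_pderiv_le i _ m ((hp F hF).trans (Nat.le_succ m))

/-- Structure lemma: `S∘F ⊆ ℂF + span{∂ᵢF} + span{∂ᵢ∂ⱼ(σ∘F)}`. -/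
lemma range_applyAt_le (F : MvPolynomial (Fin n) ℂ) :
    LinearMap.range (applyAt F) ≤
      Submodule.span ℂ {F} ⊔
        Submodule.span ℂ (Set.range fun i : Fin n => MvPolynomial.pderiv i F) ⊔
        Submodule.span ℂ {p | ∃ (i j : Fin n) (σ : MvPolynomial (Fin n) ℂ),
          p = MvPolynomial.pderiv i (MvPolynomial.pderiv j (D n σ F))} := by
  set S1 := Submodule.span ℂ ({F} : Set (MvPolynomial (Fin n) ℂ)) with hS1
  set S2 := Submodule.span ℂ (Set.range fun i : Fin n => MvPolynomial.pderiv i F) with hS2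
  set S3 := Submodule.span ℂ {p | ∃ (i j : Fin n) (σ : MvPolynomial (Fin n) ℂ),
      p = MvPolynomial.pderiv i (MvPolynomial.pderiv j (D n σ F))} with hS3
  have key : ∀ (i : Fin n) x, x ∈ S1 ⊔ S2 ⊔ S3 →
      MvPolynomial.pderiv i x ∈ S1 ⊔ S2 ⊔ S3 := by
    intro i x hx
    have hmap : (S1 ⊔ S2 ⊔ S3).map (MvPolynomial.pderiv i).toLinearMap ≤ S1 ⊔ S2 ⊔ S3 := by
      rw [Submodule.map_sup, Submodule.map_sup, hS1, hS2, hS3,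
        Submodule.map_span, Submodule.map_span, Submodule.map_span]
      refine sup_le (sup_le ?_ ?_) ?_
      · rw [Set.image_singleton]
        refine Submodule.span_le.mpr ?_
        rintro _ rfl
        exact Submodule.mem_sup_left (Submodule.mem_sup_right
          (Submodule.subset_span ⟨i, rfl⟩))
      · refine Submodule.span_le.mpr ?_
        rintro _ ⟨_, ⟨j, rfl⟩, rfl⟩
        refine Submodule.mem_sup_right (Submodule.subset_span ⟨i, j, 1, ?_⟩)
        rw [D_one]
        rfl
      · refine Submodule.span_le.mpr ?_
        rintro _ ⟨_, ⟨a, b, σ, rfl⟩, rfl⟩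
        refine Submodule.mem_sup_right (Submodule.subset_span ⟨a, b, X i * σ, ?_⟩)
        show MvPolynomial.pderiv i (MvPolynomial.pderiv a (MvPolynomial.pderiv b (D n σ F))) = _
        rw [pderiv_D, pderiv_comm i a, pderiv_comm i b]
    exact hmap ⟨x, hx, rfl⟩
  rintro _ ⟨σ, rfl⟩
  rw [applyAt_apply]
  induction σ using MvPolynomial.induction_on with
  | C a =>
      rw [D_C]
      exact Submodule.smul_mem _ _
        (Submodule.mem_sup_left (Submodule.mem_sup_left (Submodule.subset_span rfl)))
  | add p q hp hq =>
      rw [map_add]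
      exact add_mem hp hq
  | mul_X p i hp =>
      rw [mul_comm, pderiv_D]
      exact key i _ hp


lemma isHomogeneous_totalDegree_le {p : MvPolynomial (Fin n) ℂ} {m : ℕ}
    (h : p.IsHomogeneous m) : p.totalDegree ≤ m := by
  rcases eq_or_ne p 0 with rfl | hp
  · simp
  · exact le_of_eq (h.totalDegree hp)

lemma mem_span_one_union_X {p : MvPolynomial (Fin n) ℂ} (h : p.totalDegree ≤ 1) :
    p ∈ Submodule.span ℂ ({1} ∪ Set.range (X : Fin n → MvPolynomial (Fin n) ℂ)) := by
  rw [MvPolynomial.as_sum p]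
  apply Submodule.sum_mem
  intro d hd
  have hdeg : Finsupp.degree d ≤ 1 := by
    have h1 := le_totalDegree hd
    have h2 := sum_eq_degree d
    omega
  rcases Nat.le_one_iff_eq_zero_or_eq_one.mp hdeg with h0 | h1
  · have hd0 : d = 0 := (Finsupp.degree_eq_zero_iff d).mp h0
    rw [hd0]
    have heq : (monomial (0 : Fin n →₀ ℕ)) (coeff 0 p)
        = (coeff 0 p) • (1 : MvPolynomial (Fin n) ℂ) := by
      rw [monomial_zero', C_eq_smul_one]
    rw [heq]
    exact Submodule.smul_mem _ _ (Submodule.subset_span (Or.inl rfl))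
  · have hsupp : d.support.Nonempty := by
      rw [Finsupp.support_nonempty_iff]
      intro h0
      rw [h0, map_zero] at h1
      omega
    obtain ⟨j, hj⟩ := hsupp
    have hne := Finsupp.mem_support_iff.mp hj
    have hle := Finsupp.le_degree j d
    have hdj : d j = 1 := by omega
    have hd1 : d = Finsupp.single j 1 := by
      ext k
      rcases eq_or_ne k j with rfl | hk
      · simp [hdj]
      · rw [Finsupp.single_eq_of_ne' (Ne.symm hk)]
        by_contra hk0
        have hks : k ∈ d.support := Finsupp.mem_support_iff.mpr hk0
        have hkerase : k ∈ d.support.erase j := Finset.mem_erase.mpr ⟨hk, hks⟩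
        have hsum : Finsupp.degree d = d j + ∑ i ∈ d.support.erase j, d i :=
          (Finset.add_sum_erase _ _ hj).symm
        have hge : d k ≤ ∑ i ∈ d.support.erase j, d i :=
          Finset.single_le_sum (fun _ _ => Nat.zero_le _) hkerase
        omega
    rw [hd1]
    have heq : (monomial (Finsupp.single j 1)) (coeff (Finsupp.single j 1) p)
        = (coeff (Finsupp.single j 1) p) • X j := by
      rw [X, smul_monomial, smul_eq_mul, mul_one]
    rw [heq]
    exact Submodule.smul_mem _ _ (Submodule.subset_span (Or.inr ⟨j, rfl⟩))

lemma range_mono_of_mem {F G : MvPolynomial (Fin n) ℂ}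
    (h : G ∈ LinearMap.range (applyAt F)) :
    LinearMap.range (applyAt G) ≤ LinearMap.range (applyAt F) := by
  obtain ⟨ρ, hρ⟩ := h
  have hρ' : D n ρ F = G := hρ
  rintro _ ⟨τ, rfl⟩
  refine ⟨τ * ρ, ?_⟩
  rw [applyAt_apply, applyAt_apply, D_mul, hρ']

lemma mem_annIdeal_iff {F σ : MvPolynomial (Fin n) ℂ} :
    σ ∈ annIdeal F ↔ D n σ F = 0 := Iff.rfl

lemma ann_mono_of_mem {F G : MvPolynomial (Fin n) ℂ}
    (h : G ∈ LinearMap.range (applyAt F)) :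
    annIdeal F ≤ annIdeal G := by
  obtain ⟨ρ, hρ⟩ := h
  have hρ' : D n ρ F = G := hρ
  intro σ hσ
  have h0 : D n σ F = 0 := hσ
  rw [mem_annIdeal_iff, ← hρ', ← D_mul, mul_comm, D_mul, h0, map_zero]

lemma eq_C_of_isHomogeneous_zero {p : MvPolynomial (Fin n) ℂ}
    (h : p.IsHomogeneous 0) : p = C (coeff 0 p) := by
  conv_lhs => rw [← (show (homogeneousComponent 0) p = p by
    rw [homogeneousComponent_of_mem h, if_pos rfl])]
  rw [homogeneousComponent_zero]


lemma pderiv_eq_zero_of_isHomogeneous_zero {p : MvPolynomial (Fin n) ℂ}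
    (h : p.IsHomogeneous 0) (i : Fin n) : MvPolynomial.pderiv i p = 0 := by
  have hp := eq_C_of_isHomogeneous_zero h
  rw [hp, pderiv_C]

lemma pderiv3_eq_zero (i j k : Fin n) {p : MvPolynomial (Fin n) ℂ} {m : ℕ}
    (hm : m ≤ 2) (h : p.IsHomogeneous m) :
    MvPolynomial.pderiv k (MvPolynomial.pderiv j (MvPolynomial.pderiv i p)) = 0 := by
  interval_cases m
  · rw [pderiv_eq_zero_of_isHomogeneous_zero h i, map_zero, map_zero]
  · have h' : (MvPolynomial.pderiv i p).IsHomogeneous 0 := isHomogeneous_pderiv i h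
    rw [pderiv_eq_zero_of_isHomogeneous_zero h' j, map_zero]
  · have h' : (MvPolynomial.pderiv j (MvPolynomial.pderiv i p)).IsHomogeneous 0 :=
      isHomogeneous_pderiv j (isHomogeneous_pderiv i h)
    exact pderiv_eq_zero_of_isHomogeneous_zero h' k

lemma eq_C_of_totalDegree_le_zero {p : MvPolynomial (Fin n) ℂ}
    (h : p.totalDegree ≤ 0) : p = C (coeff 0 p) := by
  apply eq_C_of_isHomogeneous_zero
  rw [← MvPolynomial.totalDegree_zero_iff_isHomogeneous]
  omega

/-- Let `F = F₃ + F₂ + F₁ + F₀ ∈ ℂ[x₁,…,xₙ]` be a polynomial of degree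
three whose apolar algebra has the maximal Hilbert function `(1, n, n, 1)`, i.e.
`dim_ℂ (S∘F) = 2n + 2`. Then `S∘F` is the internal direct sum
`ℂ·(F₃+F₂) ⊕ span{αᵢ∘F₃} ⊕ (ℂ ⊕ span{x₁,…,xₙ})`; consequently, if `G = F₃+G₂+G₁+G₀`
is another degree-three polynomial with the same leading form and
`G₂ − F₂ ∈ span{αᵢ∘F₃}`, then `S∘G = S∘F` and `Ann(G) = Ann(F)`. -/
theorem apolar_of_cubic_depends_on_leading_data
    {n : ℕ} (F₃ F₂ F₁ F₀ : MvPolynomial (Fin n) ℂ)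
    (h3 : F₃.IsHomogeneous 3) (h2 : F₂.IsHomogeneous 2)
    (h1 : F₁.IsHomogeneous 1) (h0 : F₀.IsHomogeneous 0)
    (hne : F₃ ≠ 0)
    (hdim : Module.finrank ℂ (LinearMap.range (applyAt (F₃ + F₂ + F₁ + F₀))) = 2 * n + 2) :
    (LinearMap.range (applyAt (F₃ + F₂ + F₁ + F₀)) =
        Submodule.span ℂ {F₃ + F₂} ⊔
        Submodule.span ℂ (Set.range fun i : Fin n => MvPolynomial.pderiv i F₃) ⊔
        Submodule.span ℂ
          ({1} ∪ Set.range (X : Fin n → MvPolynomial (Fin n) ℂ))) ∧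
    iSupIndep
      (fun k : Fin 3 =>
        match k with
        | 0 => Submodule.span ℂ {F₃ + F₂}
        | 1 => Submodule.span ℂ (Set.range fun i : Fin n => MvPolynomial.pderiv i F₃)
        | 2 => Submodule.span ℂ
            ({1} ∪ Set.range (X : Fin n → MvPolynomial (Fin n) ℂ))) ∧
    (∀ G₂ G₁' G₀' : MvPolynomial (Fin n) ℂ,
      G₂.IsHomogeneous 2 → G₁'.IsHomogeneous 1 → G₀'.IsHomogeneous 0 →
      G₂ - F₂ ∈ Submodule.span ℂ (Set.range fun i : Fin n => MvPolynomial.pderiv i F₃) →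
      LinearMap.range (applyAt (F₃ + G₂ + G₁' + G₀')) =
          LinearMap.range (applyAt (F₃ + F₂ + F₁ + F₀)) ∧
        annIdeal (F₃ + G₂ + G₁' + G₀') = annIdeal (F₃ + F₂ + F₁ + F₀)) := by
  classical
  set F := F₃ + F₂ + F₁ + F₀ with hF
  set A := Submodule.span ℂ ({F₃ + F₂} : Set (MvPolynomial (Fin n) ℂ)) with hA
  set B := Submodule.span ℂ (Set.range fun i : Fin n => MvPolynomial.pderiv i F₃) with hB
  set W := Submodule.span ℂ
    ({1} ∪ Set.range (X : Fin n → MvPolynomial (Fin n) ℂ)) with hW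
  -- degree facts
  have hd3 : F₃.totalDegree ≤ 3 := isHomogeneous_totalDegree_le h3
  have hd2 : F₂.totalDegree ≤ 2 := isHomogeneous_totalDegree_le h2
  have hd1 : F₁.totalDegree ≤ 1 := isHomogeneous_totalDegree_le h1
  have hd0 : F₀.totalDegree ≤ 0 := isHomogeneous_totalDegree_le h0
  have hFdeg : F.totalDegree ≤ 3 := by
    rw [hF]
    refine (totalDegree_add _ _).trans (max_le ((totalDegree_add _ _).trans
      (max_le ((totalDegree_add _ _).trans (max_le hd3 (hd2.trans (by omega))))
      (hd1.trans (by omega)))) (hd0.trans (by omega)))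
  have h10deg : (F₁ + F₀).totalDegree ≤ 1 :=
    (totalDegree_add _ _).trans (max_le hd1 (hd0.trans (by omega)))
  have h210deg : (F₂ + F₁ + F₀).totalDegree ≤ 2 :=
    (totalDegree_add _ _).trans (max_le ((totalDegree_add _ _).trans
      (max_le hd2 (hd1.trans (by omega)))) (hd0.trans (by omega)))
  -- finite dimensionality and rank bounds
  haveI instA : FiniteDimensional ℂ A :=
    FiniteDimensional.span_of_finite ℂ (Set.finite_singleton _)
  haveI instB : FiniteDimensional ℂ B :=
    FiniteDimensional.span_of_finite ℂ (Set.finite_range _)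
  haveI instW : FiniteDimensional ℂ W :=
    FiniteDimensional.span_of_finite ℂ ((Set.finite_singleton 1).union (Set.finite_range _))
  have hArank : Module.finrank ℂ A ≤ 1 := by
    have h := finrank_span_le_card (R := ℂ) ({F₃ + F₂} : Set (MvPolynomial (Fin n) ℂ))
    simpa using h
  have hBrank : Module.finrank ℂ B ≤ n := by
    have h := finrank_range_le_card (R := ℂ) (fun i : Fin n => MvPolynomial.pderiv i F₃)
    simpa [Set.finrank] using h
  have hWrank : Module.finrank ℂ W ≤ n + 1 := by
    have hle : W ≤ Submodule.span ℂ (Set.range fun o : Option (Fin n) =>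
        (Option.elim o 1 X : MvPolynomial (Fin n) ℂ)) := by
      rw [hW]
      refine Submodule.span_le.mpr ?_
      rintro x (rfl | ⟨i, rfl⟩)
      · exact Submodule.subset_span ⟨none, rfl⟩
      · exact Submodule.subset_span ⟨some i, rfl⟩
    haveI : FiniteDimensional ℂ (Submodule.span ℂ (Set.range fun o : Option (Fin n) =>
        (Option.elim o 1 X : MvPolynomial (Fin n) ℂ))) :=
      FiniteDimensional.span_of_finite ℂ (Set.finite_range _)
    refine (Submodule.finrank_mono hle).trans ?_
    have h := finrank_range_le_card (R := ℂ) (fun o : Option (Fin n) =>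
      (Option.elim o 1 X : MvPolynomial (Fin n) ℂ))
    simpa [Set.finrank] using h
  have hTrank : Module.finrank ℂ ↥(A ⊔ B ⊔ W) ≤ 2 * n + 2 := by
    refine (Submodule.finrank_add_le_finrank_add_finrank _ _).trans ?_
    have h := Submodule.finrank_add_le_finrank_add_finrank A B
    omega
  -- range F ≤ A ⊔ B ⊔ W
  have hle : LinearMap.range (applyAt F) ≤ A ⊔ B ⊔ W := by
    refine (range_applyAt_le F).trans ?_
    refine sup_le (sup_le ?_ ?_) ?_
    · refine Submodule.span_le.mpr ?_
      rintro x rfl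
      have hsplit : F = (F₃ + F₂) + (F₁ + F₀) := by rw [hF]; ring
      rw [hsplit]
      exact add_mem
        (Submodule.mem_sup_left (Submodule.mem_sup_left (Submodule.subset_span rfl)))
        (Submodule.mem_sup_right (mem_span_one_union_X h10deg))
    · refine Submodule.span_le.mpr ?_
      rintro _ ⟨i, rfl⟩
      show MvPolynomial.pderiv i F ∈ (A ⊔ B ⊔ W : Submodule ℂ (MvPolynomial (Fin n) ℂ))
      have hsplit : MvPolynomial.pderiv i F = MvPolynomial.pderiv i F₃ +
          MvPolynomial.pderiv i (F₂ + F₁ + F₀) := by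
        rw [hF, ← map_add]
        congr 1
        ring
      rw [hsplit]
      exact add_mem
        (Submodule.mem_sup_left (Submodule.mem_sup_right (Submodule.subset_span ⟨i, rfl⟩)))
        (Submodule.mem_sup_right (mem_span_one_union_X
          (totalDegree_pderiv_le i _ 1 h210deg)))
    · refine Submodule.span_le.mpr ?_
      rintro _ ⟨i, j, σ, rfl⟩
      refine Submodule.mem_sup_right (mem_span_one_union_X
        (totalDegree_pderiv_le i _ 1 (totalDegree_pderiv_le j _ 2 ?_)))
      have := totalDegree_D_le 3 σ F hFdeg
      omega
  have hrange_eq : LinearMap.range (applyAt F) = A ⊔ B ⊔ W := by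
    refine Submodule.eq_of_le_of_finrank_le hle ?_
    rw [hdim]
    exact hTrank
  -- The degree ≤ 1 part S3 of S∘F equals W
  set S3 := Submodule.span ℂ {p | ∃ (i j : Fin n) (σ : MvPolynomial (Fin n) ℂ),
      p = MvPolynomial.pderiv i (MvPolynomial.pderiv j (D n σ F))} with hS3
  have hS3W : S3 ≤ W := by
    refine Submodule.span_le.mpr ?_
    rintro _ ⟨i, j, σ, rfl⟩
    refine mem_span_one_union_X
      (totalDegree_pderiv_le i _ 1 (totalDegree_pderiv_le j _ 2 ?_))
    have := totalDegree_D_le 3 σ F hFdeg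
    omega
  haveI instS3 : FiniteDimensional ℂ S3 := Submodule.finiteDimensional_of_le hS3W
  have hS3eq : S3 = W := by
    haveI instF : FiniteDimensional ℂ (Submodule.span ℂ ({F} : Set (MvPolynomial (Fin n) ℂ))) :=
      FiniteDimensional.span_of_finite ℂ (Set.finite_singleton _)
    haveI instS2 : FiniteDimensional ℂ
        (Submodule.span ℂ (Set.range fun i : Fin n => MvPolynomial.pderiv i F)) :=
      FiniteDimensional.span_of_finite ℂ (Set.finite_range _)
    have hrk : n + 1 ≤ Module.finrank ℂ S3 := by
      have hle2 := range_applyAt_le F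
      rw [← hS3] at hle2
      have hm := Submodule.finrank_mono hle2
      rw [hdim] at hm
      have hs1 := Submodule.finrank_add_le_finrank_add_finrank
        (Submodule.span ℂ ({F} : Set (MvPolynomial (Fin n) ℂ)) ⊔
          Submodule.span ℂ (Set.range fun i : Fin n => MvPolynomial.pderiv i F)) S3
      have hs2 := Submodule.finrank_add_le_finrank_add_finrank
        (Submodule.span ℂ ({F} : Set (MvPolynomial (Fin n) ℂ)))
        (Submodule.span ℂ (Set.range fun i : Fin n => MvPolynomial.pderiv i F))
      have hr1 : Module.finrank ℂ
          (Submodule.span ℂ ({F} : Set (MvPolynomial (Fin n) ℂ))) ≤ 1 := by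
        have h := finrank_span_le_card (R := ℂ) ({F} : Set (MvPolynomial (Fin n) ℂ))
        simpa using h
      have hr2 : Module.finrank ℂ
          (Submodule.span ℂ (Set.range fun i : Fin n => MvPolynomial.pderiv i F)) ≤ n := by
        have h := finrank_range_le_card (R := ℂ) (fun i : Fin n => MvPolynomial.pderiv i F)
        simpa [Set.finrank] using h
      omega
    exact Submodule.eq_of_le_of_finrank_le hS3W (hWrank.trans hrk)
  -- homogeneous component facts
  have hBhom : B ≤ MvPolynomial.homogeneousSubmodule (Fin n) ℂ 2 := by
    refine Submodule.span_le.mpr ?_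
    rintro _ ⟨i, rfl⟩
    exact isHomogeneous_pderiv i h3
  have hWK2 : W ≤ LinearMap.ker (homogeneousComponent
      (σ := Fin n) (R := ℂ) 2) := by
    rw [hW]
    refine Submodule.span_le.mpr ?_
    rintro x (rfl | ⟨i, rfl⟩)
    · rw [SetLike.mem_coe, LinearMap.mem_ker,
        homogeneousComponent_of_mem (isHomogeneous_one (Fin n) ℂ)]
      simp
    · rw [SetLike.mem_coe, LinearMap.mem_ker,
        homogeneousComponent_of_mem (isHomogeneous_X ℂ i)]
      simp
  have hWK3 : W ≤ LinearMap.ker (homogeneousComponent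
      (σ := Fin n) (R := ℂ) 3) := by
    rw [hW]
    refine Submodule.span_le.mpr ?_
    rintro x (rfl | ⟨i, rfl⟩)
    · rw [SetLike.mem_coe, LinearMap.mem_ker,
        homogeneousComponent_of_mem (isHomogeneous_one (Fin n) ℂ)]
      simp
    · rw [SetLike.mem_coe, LinearMap.mem_ker,
        homogeneousComponent_of_mem (isHomogeneous_X ℂ i)]
      simp
  have hBK3 : B ≤ LinearMap.ker (homogeneousComponent (σ := Fin n) (R := ℂ) 3) := by
    intro x hx
    rw [LinearMap.mem_ker, homogeneousComponent_of_mem (hBhom hx)]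
    simp
  have hAhc : ∀ c : ℂ, homogeneousComponent 3 (c • (F₃ + F₂)) = c • F₃ := by
    intro c
    rw [map_smul, map_add, homogeneousComponent_of_mem h3,
      homogeneousComponent_of_mem h2]
    simp
  have hBhc2 : ∀ x ∈ B, homogeneousComponent 2 x = x := by
    intro x hx
    rw [homogeneousComponent_of_mem (hBhom hx), if_pos rfl]
  refine ⟨hrange_eq, ?_, ?_⟩
  · -- independence
    intro k
    fin_cases k
    · refine Submodule.disjoint_def.mpr fun x hx hx' => ?_
      have hbound : (⨆ j, ⨆ (_ : j ≠ (0 : Fin 3)),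
          (fun k : Fin 3 => match k with
            | 0 => A | 1 => B | 2 => W) j) ≤ B ⊔ W := by
        refine iSup_le fun j => iSup_le fun hj => ?_
        fin_cases j
        · exact absurd rfl hj
        · exact le_sup_left
        · exact le_sup_right
      have hx'' : x ∈ B ⊔ W := hbound hx'
      obtain ⟨c, rfl⟩ := Submodule.mem_span_singleton.mp hx
      have h30 : homogeneousComponent 3 (c • (F₃ + F₂)) = 0 := by
        obtain ⟨b, hb, w, hw, hbw⟩ := Submodule.mem_sup.mp hx''
        rw [← hbw, map_add, LinearMap.mem_ker.mp (hBK3 hb),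
          LinearMap.mem_ker.mp (hWK3 hw), add_zero]
      rw [hAhc c] at h30
      rcases smul_eq_zero.mp h30 with hc | hc
      · rw [hc, zero_smul]
      · exact absurd hc hne
    · refine Submodule.disjoint_def.mpr fun x hx hx' => ?_
      have hbound : (⨆ j, ⨆ (_ : j ≠ (1 : Fin 3)),
          (fun k : Fin 3 => match k with
            | 0 => A | 1 => B | 2 => W) j) ≤ A ⊔ W := by
        refine iSup_le fun j => iSup_le fun hj => ?_
        fin_cases j
        · exact le_sup_left
        · exact absurd rfl hj
        · exact le_sup_right
      have hx'' : x ∈ A ⊔ W := hbound hx'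
      obtain ⟨a, ha, w, hw, haw⟩ := Submodule.mem_sup.mp hx''
      obtain ⟨c, rfl⟩ := Submodule.mem_span_singleton.mp ha
      have h30 : homogeneousComponent 3 x = 0 := LinearMap.mem_ker.mp (hBK3 hx)
      rw [← haw, map_add, LinearMap.mem_ker.mp (hWK3 hw), add_zero, hAhc c] at h30
      rcases smul_eq_zero.mp h30 with hc | hc
      · rw [hc, zero_smul, zero_add] at haw
        have h2x : homogeneousComponent 2 x = x := hBhc2 x hx
        rw [← haw, LinearMap.mem_ker.mp (hWK2 hw)] at h2x
        rw [← haw, ← h2x]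
      · exact absurd hc hne
    · refine Submodule.disjoint_def.mpr fun x hx hx' => ?_
      have hbound : (⨆ j, ⨆ (_ : j ≠ (2 : Fin 3)),
          (fun k : Fin 3 => match k with
            | 0 => A | 1 => B | 2 => W) j) ≤ A ⊔ B := by
        refine iSup_le fun j => iSup_le fun hj => ?_
        fin_cases j
        · exact le_sup_left
        · exact le_sup_right
        · exact absurd rfl hj
      have hx'' : x ∈ A ⊔ B := hbound hx'
      obtain ⟨a, ha, b, hb, hab⟩ := Submodule.mem_sup.mp hx''
      obtain ⟨c, rfl⟩ := Submodule.mem_span_singleton.mp ha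
      have h30 : homogeneousComponent 3 x = 0 := LinearMap.mem_ker.mp (hWK3 hx)
      rw [← hab, map_add, LinearMap.mem_ker.mp (hBK3 hb), add_zero, hAhc c] at h30
      rcases smul_eq_zero.mp h30 with hc | hc
      · rw [hc, zero_smul, zero_add] at hab
        have h2x : homogeneousComponent 2 x = 0 := LinearMap.mem_ker.mp (hWK2 hx)
        rw [← hab, hBhc2 b hb] at h2x
        rw [← hab, h2x]
      · exact absurd hc hne
  · -- the G statement
    intro G₂ G₁' G₀' hG2 hG1 hG0 hGF
    set G := F₃ + G₂ + G₁' + G₀' with hG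
    have hg2 : G₂.totalDegree ≤ 2 := isHomogeneous_totalDegree_le hG2
    have hg1 : G₁'.totalDegree ≤ 1 := isHomogeneous_totalDegree_le hG1
    have hg0 : G₀'.totalDegree ≤ 0 := isHomogeneous_totalDegree_le hG0
    have hg10 : (G₁' + G₀').totalDegree ≤ 1 :=
      (totalDegree_add _ _).trans (max_le hg1 (hg0.trans (by omega)))
    have hGmem : G ∈ LinearMap.range (applyAt F) := by
      rw [hrange_eq]
      have hsplit : G = (F₃ + F₂) + (G₂ - F₂) + (G₁' + G₀') := by rw [hG]; ring
      rw [hsplit]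
      exact add_mem (add_mem
        (Submodule.mem_sup_left (Submodule.mem_sup_left (Submodule.subset_span rfl)))
        (Submodule.mem_sup_left (Submodule.mem_sup_right hGF)))
        (Submodule.mem_sup_right (mem_span_one_union_X hg10))
    -- 1 ∈ S∘G via a nonzero third derivative of F₃
    obtain ⟨i, hi⟩ := exists_pderiv_ne_zero hne h3
    obtain ⟨j, hj⟩ := exists_pderiv_ne_zero hi (isHomogeneous_pderiv i h3)
    obtain ⟨k, hk⟩ := exists_pderiv_ne_zero hj
      (isHomogeneous_pderiv j (isHomogeneous_pderiv i h3))
    set c := MvPolynomial.pderiv k (MvPolynomial.pderiv j (MvPolynomial.pderiv i F₃)) with hc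
    have hc0 : c.IsHomogeneous 0 :=
      isHomogeneous_pderiv k (isHomogeneous_pderiv j (isHomogeneous_pderiv i h3))
    have hcC : c = C (coeff 0 c) := eq_C_of_isHomogeneous_zero hc0
    have hcne : coeff 0 c ≠ 0 := by
      intro h0
      apply hk
      rw [hc] at hcC ⊢
      rw [hcC, h0, map_zero]
    have h3rd : D n (X k * (X j * (X i * 1))) G = c := by
      rw [pderiv_D, pderiv_D, pderiv_D, D_one]
      have hsplit : MvPolynomial.pderiv k (MvPolynomial.pderiv j (MvPolynomial.pderiv i G)) =
          MvPolynomial.pderiv k (MvPolynomial.pderiv j (MvPolynomial.pderiv i F₃)) +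
          (MvPolynomial.pderiv k (MvPolynomial.pderiv j (MvPolynomial.pderiv i G₂)) +
           (MvPolynomial.pderiv k (MvPolynomial.pderiv j (MvPolynomial.pderiv i G₁')) +
            MvPolynomial.pderiv k (MvPolynomial.pderiv j (MvPolynomial.pderiv i G₀')))) := by
        rw [hG]
        simp only [map_add]
        ring
      rw [hsplit, pderiv3_eq_zero i j k (by omega) hG2,
        pderiv3_eq_zero i j k (by omega) hG1, pderiv3_eq_zero i j k (by omega) hG0]
      simp
      exact hc.symm
    have h1G : (1 : MvPolynomial (Fin n) ℂ) ∈ LinearMap.range (applyAt G) := by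
      have hcmem : c ∈ LinearMap.range (applyAt G) := ⟨X k * (X j * (X i * 1)), h3rd⟩
      obtain ⟨a, ha, hane⟩ : ∃ a : ℂ, c = C a ∧ a ≠ 0 := ⟨coeff 0 c, hcC, hcne⟩
      have hone : (1 : MvPolynomial (Fin n) ℂ) = a⁻¹ • c := by
        rw [ha, C_eq_smul_one, smul_smul, inv_mul_cancel₀ hane, one_smul]
      rw [hone]
      exact Submodule.smul_mem _ _ hcmem
    -- W = S3 ≤ S∘G
    have hFGdeg : (F - G).totalDegree ≤ 2 := by
      have hsplit : F - G = (F₂ - G₂) + (F₁ - G₁') + (F₀ - G₀') := by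
        rw [hF, hG]; ring
      rw [hsplit]
      have e2 : (F₂ - G₂).totalDegree ≤ 2 := isHomogeneous_totalDegree_le (h2.sub hG2)
      have e1 : (F₁ - G₁').totalDegree ≤ 1 := isHomogeneous_totalDegree_le (h1.sub hG1)
      have e0 : (F₀ - G₀').totalDegree ≤ 0 := isHomogeneous_totalDegree_le (h0.sub hG0)
      exact (totalDegree_add _ _).trans (max_le ((totalDegree_add _ _).trans
        (max_le e2 (e1.trans (by omega)))) (e0.trans (by omega)))
    have hS3G : S3 ≤ LinearMap.range (applyAt G) := by
      rw [hS3]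
      refine Submodule.span_le.mpr ?_
      rintro _ ⟨a, b, σ, rfl⟩
      have h1' : G + (F - G) = F := by ring
      have hsplit : MvPolynomial.pderiv a (MvPolynomial.pderiv b (D n σ F)) =
          MvPolynomial.pderiv a (MvPolynomial.pderiv b (D n σ G)) +
          MvPolynomial.pderiv a (MvPolynomial.pderiv b (D n σ (F - G))) := by
        conv_lhs => rw [← h1']
        rw [map_add (D n σ), map_add, map_add]
      rw [hsplit]
      refine add_mem ⟨X a * (X b * σ), ?_⟩ ?_
      · rw [applyAt_apply, pderiv_D, pderiv_D]
      · have hdeg0 : (MvPolynomial.pderiv a (MvPolynomial.pderiv b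
            (D n σ (F - G)))).totalDegree ≤ 0 := by
          refine totalDegree_pderiv_le a _ 0 (totalDegree_pderiv_le b _ 1 ?_)
          have := totalDegree_D_le 2 σ (F - G) hFGdeg
          omega
        have hex := eq_C_of_totalDegree_le_zero hdeg0
        rw [hex, C_eq_smul_one]
        exact Submodule.smul_mem _ _ h1G
    have hWG : W ≤ LinearMap.range (applyAt G) := hS3eq ▸ hS3G
    have hBG : B ≤ LinearMap.range (applyAt G) := by
      rw [hB]
      refine Submodule.span_le.mpr ?_
      rintro _ ⟨i0, rfl⟩
      show MvPolynomial.pderiv i0 F₃ ∈ LinearMap.range (applyAt G)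
      have hadd : MvPolynomial.pderiv i0 G =
          MvPolynomial.pderiv i0 F₃ + MvPolynomial.pderiv i0 (G₂ + (G₁' + G₀')) := by
        conv_lhs => rw [hG, show F₃ + G₂ + G₁' + G₀' = F₃ + (G₂ + (G₁' + G₀')) by ring]
        rw [map_add]
      have hsplit : MvPolynomial.pderiv i0 F₃ =
          MvPolynomial.pderiv i0 G - MvPolynomial.pderiv i0 (G₂ + (G₁' + G₀')) := by
        rw [hadd]
        ring
      rw [hsplit]
      refine sub_mem ⟨X i0, ?_⟩ (hWG (mem_span_one_union_X ?_))
      · rw [applyAt_apply, D_X]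
      · have : (G₂ + (G₁' + G₀')).totalDegree ≤ 2 :=
          (totalDegree_add _ _).trans (max_le hg2 (hg10.trans (by omega)))
        exact totalDegree_pderiv_le i0 _ 1 this
    have hAG : A ≤ LinearMap.range (applyAt G) := by
      rw [hA]
      refine Submodule.span_le.mpr ?_
      rintro x rfl
      have hsplit : F₃ + F₂ = G - (G₂ - F₂) - (G₁' + G₀') := by rw [hG]; ring
      rw [hsplit]
      exact sub_mem (sub_mem (self_mem_range G) (hBG hGF))
        (hWG (mem_span_one_union_X hg10))
    have hFmemG : F ∈ LinearMap.range (applyAt G) := by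
      have hFT : F ∈ A ⊔ B ⊔ W := hrange_eq ▸ self_mem_range F
      exact (sup_le (sup_le hAG hBG) hWG) hFT
    exact ⟨le_antisymm (range_mono_of_mem hGmem) (range_mono_of_mem hFmemG),
      le_antisymm (ann_mono_of_mem hFmemG) (ann_mono_of_mem hGmem)⟩


end Apolarity
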